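/- The two-sided infinite Fibonacci sequence v : ℤ → {0,1} defined by v_n = 1 if (nα mod 1) ∈ [1−α, 1) and v_n = 0 otherwise, where α = (√5 − 1)/2, satisfies the symmetry v_{−1} = 1, v_0 = 0, and v_n = v_{−1−n} for all n ∈ ℤ with n ∉ {−1, 0}. -/

import Mathlib

noncomputable def alpha : ℝ := (Real.sqrt 5 - 1) / 2

/-- The two-sided Fibonacci sequence `v n = χ_{[1-α,1)}(nα mod 1)`. -/
noncomputable def v (n : ℤ) : ℕ :=
  if Int.fract ((n : ℝ) * alpha) ∈ Set.Ico (1 - alpha) 1 then 1 else 0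

lemma alpha_irr : Irrational alpha := by
  have h5 : Irrational (Real.sqrt 5) := by
    have : Nat.Prime 5 := by norm_num
    simpa using this.irrational_sqrt
  have h1 : Irrational (Real.sqrt 5 - 1) := by
    simpa using h5.sub_intCast 1
  have := h1.div_natCast (m := 2) (by norm_num)
  simpa [alpha] using this

lemma alpha_pos : 0 < alpha := by
  have : (1:ℝ) < Real.sqrt 5 := by
    have := Real.lt_sqrt (x := 1) (y := 5) (by norm_num)
    nlinarith [Real.sq_sqrt (by norm_num : (5:ℝ) ≥ 0), Real.sqrt_nonneg 5]
  unfold alpha; linarith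

lemma alpha_lt_one : alpha < 1 := by
  have : Real.sqrt 5 < 3 := by
    nlinarith [Real.sq_sqrt (by norm_num : (5:ℝ) ≥ 0), Real.sqrt_nonneg 5]
  unfold alpha; linarith

lemma mul_alpha_irr (n : ℤ) (hn : n ≠ 0) : Irrational ((n : ℝ) * alpha) := by
  exact (alpha_irr.intCast_mul hn)

theorem fibonacci_symmetry :
    v (-1) = 1 ∧ v 0 = 0 ∧ ∀ n : ℤ, n ≠ -1 → n ≠ 0 → v n = v (-1 - n) := by
  have h0 := alpha_pos
  have h1 := alpha_lt_one
  refine ⟨?_, ?_, ?_⟩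
  · unfold v
    rw [if_pos]
    constructor
    · push_cast
      rw [show (-1 : ℝ) * alpha = -alpha by ring]
      rw [Int.fract_neg]
      · rw [Int.fract_eq_self.2 ⟨le_of_lt h0, h1⟩]
      · rw [Int.fract_eq_self.2 ⟨le_of_lt h0, h1⟩]; linarith
    · exact Int.fract_lt_one _
  · unfold v
    rw [if_neg]
    intro ⟨hle, _⟩
    push_cast at hle
    rw [show (0:ℝ) * alpha = 0 by ring, Int.fract_zero] at hle
    linarith
  · intro n hn1 hn0
    set x := Int.fract ((n : ℝ) * alpha) with hx
    have hx01 : 0 ≤ x ∧ x < 1 := ⟨Int.fract_nonneg _, Int.fract_lt_one _⟩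
    have hxpos : 0 < x := by
      rw [hx, Int.fract_pos]
      exact (mul_alpha_irr n hn0).ne_int _
    have hxne : x ≠ 1 - alpha := by
      intro h
      -- then (n+1)α = nα + α = ⌊nα⌋ + 1 ∈ ℤ
      have : ((n + 1 : ℤ) : ℝ) * alpha = (⌊(n:ℝ) * alpha⌋ + 1 : ℤ) := by
        have h2 : (n:ℝ) * alpha - ⌊(n:ℝ)*alpha⌋ = 1 - alpha := by
          rw [Int.self_sub_floor, ← hx]; exact h
        push_cast; linarith
      exact (mul_alpha_irr (n+1) (by omega)).ne_int _ this
    -- fract ((n+1)α) = fract (x + α)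
    have key : Int.fract (((n:ℝ) + 1) * alpha) = Int.fract (x + alpha) := by
      have : ((n:ℝ) + 1) * alpha = (x + alpha) + ⌊(n:ℝ)*alpha⌋ := by
        have h2 : (n:ℝ) * alpha - ⌊(n:ℝ)*alpha⌋ = x := by
          rw [Int.self_sub_floor, ← hx]
        linarith
      rw [this, Int.fract_add_intCast]
    have hcast : ((-1 - n : ℤ) : ℝ) * alpha = -(((n:ℝ) + 1) * alpha) := by
      push_cast; ring
    have hfne : Int.fract (((n:ℝ) + 1) * alpha) ≠ 0 := by
      have := (Int.fract_pos (a := ((n:ℝ) + 1) * alpha)).2 (by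
        intro hm
        exact (mul_alpha_irr (n+1) (by omega)).ne_int _ (by push_cast; linarith))
      linarith
    have hneg : Int.fract (((-1 - n : ℤ) : ℝ) * alpha)
        = 1 - Int.fract (((n:ℝ) + 1) * alpha) := by
      rw [hcast, Int.fract_neg hfne]
    unfold v
    by_cases hcase : 1 - alpha ≤ x
    · -- x ∈ [1-α, 1): x + α ∈ [1,2), fract = x + α - 1
      have hxgt : 1 - alpha < x := lt_of_le_of_ne hcase (Ne.symm hxne)
      have hfr : Int.fract (x + alpha) = x + alpha - 1 := by
        rw [show x + alpha = (x + alpha - 1) + ((1:ℤ):ℝ) by push_cast; ring,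
          Int.fract_add_intCast, Int.fract_eq_self.2 ⟨by linarith, by linarith [hx01.2]⟩]
        push_cast; ring
      rw [if_pos ⟨hcase, hx01.2⟩, if_pos]
      rw [hneg, key, hfr]
      constructor
      · linarith [hx01.2]
      · linarith
    · push_neg at hcase
      have hfr : Int.fract (x + alpha) = x + alpha := by
        rw [Int.fract_eq_self.2 ⟨by linarith [hx01.1], by linarith⟩]
      rw [if_neg (by intro ⟨hle, _⟩; linarith), if_neg]
      intro ⟨hle, _⟩
      rw [hneg, key, hfr] at hle
      linarith
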